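/- Let P be the extraspecial 3-group of order 27 and exponent 3 with generators g, h and commutator c = [g,h], and let k be a field of characteristic 3. Then the elements x̃ = g^{-1} - g and ỹ = h^{-1} - h of kP, with z̃ = x̃ỹ - ỹx̃, satisfy x̃^3 = 0, ỹ^3 = 0, x̃z̃ - z̃x̃ = z̃ỹz̃, and ỹz̃ - z̃ỹ = -z̃x̃z̃. -/

import Mathlib

private lemma stmt11_aux {R : Type*} [Ring R] (h3 : (3:R) = 0) (A B C : R)
    (hA : A*(A*A) = 1) (hB : B*(B*B) = 1) (hC : C*(C*C) = 1)
    (hCA : C*A = A*C) (hCB : C*B = B*C) (hBA : B*A = A*(B*(C*C)))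
    (x y z : R) (hx : x = A*A - A) (hy : y = B*B - B) (hz : z = x*y - y*x) :
    x*(x*x) = 0 ∧ y*(y*y) = 0 ∧
      x * z - z * x = z * y * z ∧ y * z - z * y = -(z * x * z) := by
  have hBA' : ∀ t, B*(A*t) = A*(B*(C*(C*t))) := fun t => by
    rw [← mul_assoc, hBA]; simp only [mul_assoc]
  have hCA' : ∀ t, C*(A*t) = A*(C*t) := fun t => by rw [← mul_assoc, hCA, mul_assoc]
  have hCB' : ∀ t, C*(B*t) = B*(C*t) := fun t => by rw [← mul_assoc, hCB, mul_assoc]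
  have hA' : ∀ t, A*(A*(A*t)) = t := fun t => by
    rw [← mul_assoc, ← mul_assoc, show A*A*A = 1 by rw [mul_assoc, hA], one_mul]
  have hB' : ∀ t, B*(B*(B*t)) = t := fun t => by
    rw [← mul_assoc, ← mul_assoc, show B*B*B = 1 by rw [mul_assoc, hB], one_mul]
  have hC' : ∀ t, C*(C*(C*t)) = t := fun t => by
    rw [← mul_assoc, ← mul_assoc, show C*C*C = 1 by rw [mul_assoc, hC], one_mul]
  have kk : ∀ (m : R) (v : R), (m*3)*v = 0 := fun m v => by rw [h3, mul_zero, zero_mul]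
  have k3 : ∀ v : R, (3:ℤ) • v = 0 := fun v => by
    rw [zsmul_eq_mul, show ((3:ℤ):R) = 1*3 by norm_num]; exact kk 1 v
  have km3 : ∀ v : R, (-3:ℤ) • v = 0 := fun v => by
    rw [zsmul_eq_mul, show ((-3:ℤ):R) = (-1)*3 by norm_num]; exact kk (-1) v
  have k6 : ∀ v : R, (6:ℤ) • v = 0 := fun v => by
    rw [zsmul_eq_mul, show ((6:ℤ):R) = 2*3 by norm_num]; exact kk 2 v
  have km6 : ∀ v : R, (-6:ℤ) • v = 0 := fun v => by
    rw [zsmul_eq_mul, show ((-6:ℤ):R) = (-2)*3 by norm_num]; exact kk (-2) v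
  have k12 : ∀ v : R, (12:ℤ) • v = 0 := fun v => by
    rw [zsmul_eq_mul, show ((12:ℤ):R) = 4*3 by norm_num]; exact kk 4 v
  have km12 : ∀ v : R, (-12:ℤ) • v = 0 := fun v => by
    rw [zsmul_eq_mul, show ((-12:ℤ):R) = (-4)*3 by norm_num]; exact kk (-4) v
  subst hx hy hz
  refine ⟨?_, ?_, ?_, ?_⟩ <;>
  · simp only [mul_sub, sub_mul, mul_assoc, hBA', hCA', hCB', hA', hB', hC',
      hBA, hCA, hCB, hA, hB, hC, one_mul, mul_one, neg_sub, mul_neg, neg_mul, neg_neg, sub_neg_eq_add]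
    rw [← sub_eq_zero]
    abel_nf
    try simp only [k3, km3, k6, km6, k12, km12, add_zero, zero_add, neg_zero, smul_zero]
    try abel

open scoped commutatorElement

/-- Let `P` be the extraspecial 3-group of order 27 and exponent 3 with generators
`g, h` and central commutator `c = [g,h]`, and let `k` be a field of characteristic 3.
Then the elements `x̃ = g⁻¹ - g` and `ỹ = h⁻¹ - h` of `kP`, with `z̃ = x̃ỹ - ỹx̃`,
satisfy `x̃³ = 0`, `ỹ³ = 0`, `x̃z̃ - z̃x̃ = z̃ỹz̃`, and `ỹz̃ - z̃ỹ = -z̃x̃z̃`. -/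
theorem stmt11 (k : Type*) [Field k] [CharP k 3]
    (P : Type*) [Group P] (g h c : P)
    (hg3 : g ^ 3 = 1) (hh3 : h ^ 3 = 1) (hc3 : c ^ 3 = 1)
    (hcomm : ⁅g, h⁆ = c) (hcen : c ∈ Subgroup.center P)
    (x y z : MonoidAlgebra k P)
    (hx : x = MonoidAlgebra.of k P g⁻¹ - MonoidAlgebra.of k P g)
    (hy : y = MonoidAlgebra.of k P h⁻¹ - MonoidAlgebra.of k P h)
    (hz : z = x * y - y * x) :
    x ^ 3 = 0 ∧ y ^ 3 = 0 ∧
      x * z - z * x = z * y * z ∧ y * z - z * y = -(z * x * z) := by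
  have hccen : ∀ p : P, p * c = c * p := fun p => Subgroup.mem_center_iff.mp hcen p
  have hgc : g * (g * g) = 1 := by simpa [pow_succ, mul_assoc] using hg3
  have hhc : h * (h * h) = 1 := by simpa [pow_succ, mul_assoc] using hh3
  have hcc : c * (c * c) = 1 := by simpa [pow_succ, mul_assoc] using hc3
  have hginv : g⁻¹ = g * g := inv_eq_of_mul_eq_one_right hgc
  have hhinv : h⁻¹ = h * h := inv_eq_of_mul_eq_one_right hhc
  have hba : h * g = g * (h * (c * c)) := by
    have e1 : c * (h * g) = g * h := by rw [← hcomm]; group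
    have e2 : c * (g * (h * (c * c))) = g * h := by
      rw [← hccen (g * (h * (c * c)))]
      simp only [mul_assoc, hcc, mul_one]
    exact mul_left_cancel (e1.trans e2.symm)
  have hk3 : (3:k) = 0 := by exact_mod_cast (CharP.cast_eq_zero k 3)
  have h3 : (3 : MonoidAlgebra k P) = 0 := by
    rw [← map_ofNat (algebraMap k (MonoidAlgebra k P)) 3, hk3, map_zero]
  set A := MonoidAlgebra.of k P g with hAdef
  set B := MonoidAlgebra.of k P h with hBdef
  set C := MonoidAlgebra.of k P c with hCdef
  have hA : A*(A*A) = 1 := by rw [hAdef, ← map_mul, ← map_mul, hgc, map_one]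
  have hB : B*(B*B) = 1 := by rw [hBdef, ← map_mul, ← map_mul, hhc, map_one]
  have hC : C*(C*C) = 1 := by rw [hCdef, ← map_mul, ← map_mul, hcc, map_one]
  have hCA : C*A = A*C := by
    rw [hAdef, hCdef, ← map_mul, ← map_mul, ← hccen g]
  have hCB : C*B = B*C := by
    rw [hBdef, hCdef, ← map_mul, ← map_mul, ← hccen h]
  have hBA : B*A = A*(B*(C*C)) := by
    rw [hAdef, hBdef, hCdef, ← map_mul, ← map_mul, ← map_mul, ← map_mul, hba]
  have hx' : x = A*A - A := by rw [hx, hginv, map_mul]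
  have hy' : y = B*B - B := by rw [hy, hhinv, map_mul]
  obtain ⟨e1, e2, e3, e4⟩ := stmt11_aux h3 A B C hA hB hC hCA hCB hBA x y z hx' hy' hz
  refine ⟨?_, ?_, e3, e4⟩
  · rw [pow_succ, pow_succ, pow_one, mul_assoc]; exact e1
  · rw [pow_succ, pow_succ, pow_one, mul_assoc]; exact e2
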